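/- In the Dirac case the deformed bivector is given by the Dirac bracket formula: for all covectors α, β ∈ V*, Π_D(α,β) = Π(α,β) − Σ_{i,j=1}^k Π(α,φ_i) (M⁻¹)_{ij} Π(φ_j,β), where Π(α,φ_i) = α(X_i) and Π(φ_j,β) = −β(X_j). -/
import Mathlib

open Matrix in


/-- In the Dirac case the deformed bivector is given by the Dirac bracket
formula: Π_D(α,β) = Π(α,β) − Σ_{i,j} Π(α,φ_i)(M⁻¹)_{ij}Π(φ_j,β),
where Π(α,φ_i) = α(X_i) and Π(φ_j,β) = −β(X_j). -/
theorem stmt_4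
    (V : Type*) [AddCommGroup V] [Module ℝ V] [FiniteDimensional ℝ V]
    (k : ℕ)
    (Pi : Module.Dual ℝ V →ₗ[ℝ] V)
    (hskew : ∀ α β : Module.Dual ℝ V, α (Pi β) = - β (Pi α))
    (φ : Fin k → Module.Dual ℝ V)
    (M : Matrix (Fin k) (Fin k) ℝ)
    (hM : ∀ i j, M i j = φ i (Pi (φ j)))
    (hMinv : IsUnit M.det)
    (X : Fin k → V) (hX : ∀ i, X i = Pi (φ i))
    (Zv : Fin k → V) (hZ : ∀ i, Zv i = ∑ j, (M⁻¹ j i) • X j)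
    (S Z : Submodule ℝ V)
    (hS : S = ⨅ i, LinearMap.ker (φ i))
    (hZsub : Z = Submodule.span ℝ (Set.range X))
    (P : V →ₗ[ℝ] V)
    (hPmem : ∀ v : V, P v ∈ S)
    (hPid : ∀ v ∈ S, P v = v)
    (hPZ : ∀ v ∈ Z, P v = 0) :
    (∀ α β : Module.Dual ℝ V,
      (α.comp P) (Pi (β.comp P)) =
        α (Pi β) - ∑ i, ∑ j, α (Pi (φ i)) * (M⁻¹ i j) * (φ j (Pi β))) ∧
    (∀ (α : Module.Dual ℝ V) (i : Fin k), α (Pi (φ i)) = α (X i)) ∧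
    (∀ (β : Module.Dual ℝ V) (j : Fin k), φ j (Pi β) = - β (X j)) := by
  have hMN : M * M⁻¹ = 1 := Matrix.mul_nonsing_inv M hMinv
  have hNM : M⁻¹ * M = 1 := Matrix.nonsing_inv_mul M hMinv
  have hMT : Mᵀ = -M := by
    ext i j
    simp only [Matrix.transpose_apply, Matrix.neg_apply, hM]
    exact hskew _ _
  have hMinvT : (M⁻¹)ᵀ = -(M⁻¹) := by
    have h1 : (-M)⁻¹ = -(M⁻¹) :=
      Matrix.inv_eq_right_inv (by rw [neg_mul_neg, hMN])
    rw [Matrix.transpose_nonsing_inv, hMT, h1]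
  have hNskew : ∀ i j, M⁻¹ j i = - M⁻¹ i j := by
    intro i j
    have := congrFun (congrFun hMinvT i) j
    simpa [Matrix.transpose_apply, Matrix.neg_apply] using this
  have hφX : ∀ l j, φ l (X j) = M l j := fun l j => by rw [hX, hM]
  have hγZ : ∀ (γ : Module.Dual ℝ V) (i : Fin k),
      γ (Zv i) = ∑ m, M⁻¹ m i * γ (X m) := by
    intro γ i
    rw [hZ]
    simp [map_sum, _root_.map_smul]
  have key : ∀ (γ : Module.Dual ℝ V) (j : Fin k),
      ∑ i, M j i * γ (Zv i) = - γ (X j) := by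
    intro γ j
    have step : ∀ m : Fin k, ∑ i, M j i * M⁻¹ m i = -(1 : Matrix (Fin k) (Fin k) ℝ) j m := by
      intro m
      have : ∑ i, M j i * M⁻¹ m i = ∑ i, -(M j i * M⁻¹ i m) := by
        refine Finset.sum_congr rfl fun i _ => ?_
        rw [hNskew]; ring
      rw [this, Finset.sum_neg_distrib, ← Matrix.mul_apply, hMN]
    calc ∑ i, M j i * γ (Zv i)
        = ∑ i, ∑ m, M j i * (M⁻¹ m i * γ (X m)) := by
          simp only [hγZ, Finset.mul_sum]
      _ = ∑ m, (∑ i, M j i * M⁻¹ m i) * γ (X m) := by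
          rw [Finset.sum_comm]
          refine Finset.sum_congr rfl fun m _ => ?_
          rw [Finset.sum_mul]
          refine Finset.sum_congr rfl fun i _ => by ring
      _ = ∑ m, (-(1 : Matrix (Fin k) (Fin k) ℝ) j m) * γ (X m) := by
          refine Finset.sum_congr rfl fun m _ => by rw [step]
      _ = - γ (X j) := by
          simp [Matrix.one_apply, Finset.sum_ite_eq]
  have hφPi : ∀ (β : Module.Dual ℝ V) (j : Fin k), φ j (Pi β) = - β (X j) := by
    intro β j
    rw [hskew, hX]
  have hZmem : ∀ i, Zv i ∈ Z := by
    intro i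
    rw [hZ]
    exact Submodule.sum_mem _ fun j _ => Submodule.smul_mem _ _
      (by rw [hZsub]; exact Submodule.subset_span ⟨j, rfl⟩)
  have hPv : ∀ v : V, P v = v - ∑ i, φ i v • Zv i := by
    intro v
    have hv' : v - ∑ i, φ i v • Zv i ∈ S := by
      rw [hS]
      simp only [Submodule.mem_iInf, LinearMap.mem_ker]
      intro l
      have hφZ : ∀ i, φ l (Zv i) = if l = i then (1:ℝ) else 0 := by
        intro i
        calc φ l (Zv i) = ∑ j, M l j * M⁻¹ j i := by
              rw [hγZ]
              exact Finset.sum_congr rfl fun j _ => by rw [hφX]; ring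
          _ = (M * M⁻¹) l i := (Matrix.mul_apply).symm
          _ = if l = i then 1 else 0 := by rw [hMN]; simp [Matrix.one_apply]
      simp [map_sub, map_sum, _root_.map_smul, hφZ, Finset.sum_ite_eq]
    have hz : (∑ i, φ i v • Zv i) ∈ Z :=
      Submodule.sum_mem _ fun i _ => Submodule.smul_mem _ _ (hZmem i)
    have : P v = P (v - ∑ i, φ i v • Zv i) + P (∑ i, φ i v • Zv i) := by
      rw [← map_add, sub_add_cancel]
    rw [this, hPid _ hv', hPZ _ hz, add_zero]
  refine ⟨?_, fun α i => by rw [hX], hφPi⟩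
  intro α β
  have hβP : Pi (β.comp P) = Pi β - ∑ i, β (Zv i) • X i := by
    have hβeq : β.comp P = β - ∑ i, β (Zv i) • φ i := by
      ext v
      rw [LinearMap.comp_apply, hPv]
      simp only [map_sub, map_sum, _root_.map_smul, LinearMap.sub_apply,
        LinearMap.sum_apply, LinearMap.smul_apply, smul_eq_mul]
      refine congrArg _ (Finset.sum_congr rfl fun i _ => ?_)
      exact mul_comm _ _
    rw [hβeq]
    simp only [map_sub, map_sum]
    refine congrArg _ (Finset.sum_congr rfl fun i _ => ?_)
    rw [_root_.map_smul, ← hX]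
  have hwS : Pi (β.comp P) ∈ S := by
    rw [hS]
    simp only [Submodule.mem_iInf, LinearMap.mem_ker]
    intro j
    rw [hβP]
    have : φ j (∑ i, β (Zv i) • X i) = ∑ i, M j i * β (Zv i) := by
      rw [map_sum]
      exact Finset.sum_congr rfl fun i _ => by
        rw [_root_.map_smul, smul_eq_mul, hφX]; ring
    rw [map_sub, this, key, hφPi]
    ring
  have hLHS : (α.comp P) (Pi (β.comp P)) = α (Pi β) - ∑ i, β (Zv i) * α (X i) := by
    rw [LinearMap.comp_apply, hPid _ hwS, hβP]
    simp [map_sub, map_sum, _root_.map_smul]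
  rw [hLHS]
  congr 1
  calc ∑ i, β (Zv i) * α (X i)
      = ∑ i, ∑ j, M⁻¹ j i * β (X j) * α (X i) := by
        refine Finset.sum_congr rfl fun i _ => ?_
        rw [hγZ, Finset.sum_mul]
    _ = ∑ i, ∑ j, α (Pi (φ i)) * M⁻¹ i j * (φ j (Pi β)) := by
        refine Finset.sum_congr rfl fun i _ => Finset.sum_congr rfl fun j _ => ?_
        rw [hNskew, ← hX, hφPi]
        ring
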